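/- Let F : ℝ → ℝ be continuous and π-periodic, and define F̄ = (1/π)∫₀^{2π}F(ψ)dψ. If F(ψ) = F̄/2 + c₁cos2ψ + c₂sin2ψ for some constants c₁, c₂, and F ≥ 0 everywhere, then F is of the form 2∫₀^{2π}cos²(ψ−φ)h(φ)dφ for a continuous π-periodic h, and conversely any F of this latter form with h making the transform nonnegative satisfies F̄ = (1/π)∫₀^{2π}F = 2∫₀^{2π}h. -/

import Mathlib

open Real MeasureTheory

lemma sin4pi : Real.sin (2 * (2 * π)) = 0 := by
  have := Real.sin_int_mul_pi (4:ℤ)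
  push_cast at this
  rw [show (2:ℝ) * (2 * π) = 4 * π by ring]
  exact this

lemma cos4pi : Real.cos (2 * (2 * π)) = 1 := by
  have := Real.cos_int_mul_two_pi (2:ℤ)
  push_cast at this
  simpa [mul_comm, mul_assoc, mul_left_comm] using this

lemma Ic : ∫ φ in (0:ℝ)..(2*π), cos (2*φ) = 0 := by
  rw [intervalIntegral.integral_comp_mul_left (fun x => Real.cos x) (two_ne_zero)]
  simp [integral_cos, sin4pi]

lemma Is : ∫ φ in (0:ℝ)..(2*π), sin (2*φ) = 0 := by
  rw [intervalIntegral.integral_comp_mul_left (fun x => Real.sin x) (two_ne_zero)]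
  simp [integral_sin, cos4pi]

lemma Icc : ∫ φ in (0:ℝ)..(2*π), cos (2*φ)^2 = π := by
  rw [intervalIntegral.integral_comp_mul_left (fun x => Real.cos x ^ 2) (two_ne_zero)]
  simp [integral_cos_sq, sin4pi]

lemma Iss : ∫ φ in (0:ℝ)..(2*π), sin (2*φ)^2 = π := by
  rw [intervalIntegral.integral_comp_mul_left (fun x => Real.sin x ^ 2) (two_ne_zero)]
  simp [integral_sin_sq, sin4pi]

lemma Isc : ∫ φ in (0:ℝ)..(2*π), sin (2*φ) * cos (2*φ) = 0 := by
  rw [intervalIntegral.integral_comp_mul_left (fun x => Real.sin x * Real.cos x) (two_ne_zero)]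
  simp [integral_sin_mul_cos₁, sin4pi]

lemma key (h : ℝ → ℝ) (hc : Continuous h) (ψ : ℝ) :
    ∫ φ in (0:ℝ)..(2*π), cos (ψ - φ)^2 * h φ =
      (1/2) * (∫ φ in (0:ℝ)..(2*π), h φ)
      + (cos (2*ψ)/2) * (∫ φ in (0:ℝ)..(2*π), cos (2*φ) * h φ)
      + (sin (2*ψ)/2) * (∫ φ in (0:ℝ)..(2*π), sin (2*φ) * h φ) := by
  have h1 : ∀ φ : ℝ, cos (ψ - φ)^2 * h φ =
      (1/2) * h φ + (cos (2*ψ)/2) * (cos (2*φ) * h φ) + (sin (2*ψ)/2) * (sin (2*φ) * h φ) := by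
    intro φ
    have e1 : cos (ψ - φ)^2 = 1/2 + cos (2*(ψ-φ))/2 := Real.cos_sq (ψ - φ)
    have e2 : cos (2*(ψ-φ)) = cos (2*ψ) * cos (2*φ) + sin (2*ψ) * sin (2*φ) := by
      rw [show 2*(ψ-φ) = 2*ψ - 2*φ by ring, Real.cos_sub]
    rw [e1, e2]; ring
  simp only [h1]
  rw [intervalIntegral.integral_add (by apply Continuous.intervalIntegrable; fun_prop) (by apply Continuous.intervalIntegrable; fun_prop),
      intervalIntegral.integral_add (by apply Continuous.intervalIntegrable; fun_prop) (by apply Continuous.intervalIntegrable; fun_prop),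
      intervalIntegral.integral_const_mul, intervalIntegral.integral_const_mul,
      intervalIntegral.integral_const_mul]

theorem stmt_14 (F : ℝ → ℝ) (hF : Continuous F)
    (hper : ∀ ψ : ℝ, F (ψ + π) = F ψ)
    (Fbar : ℝ) (hFbar : Fbar = (1 / π) * ∫ ψ in (0:ℝ)..(2 * π), F ψ) :
    ((∃ c₁ c₂ : ℝ, ∀ ψ : ℝ, F ψ = Fbar / 2 + c₁ * cos (2 * ψ) + c₂ * sin (2 * ψ)) →
        (∀ ψ : ℝ, 0 ≤ F ψ) →
        ∃ h : ℝ → ℝ, Continuous h ∧ (∀ φ : ℝ, h (φ + π) = h φ) ∧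
          ∀ ψ : ℝ, F ψ = 2 * ∫ φ in (0:ℝ)..(2 * π), cos (ψ - φ) ^ 2 * h φ) ∧
    (∀ h : ℝ → ℝ, Continuous h → (∀ φ : ℝ, h (φ + π) = h φ) →
        (∀ ψ : ℝ, 0 ≤ ∫ φ in (0:ℝ)..(2 * π), cos (ψ - φ) ^ 2 * h φ) →
        (∀ ψ : ℝ, F ψ = 2 * ∫ φ in (0:ℝ)..(2 * π), cos (ψ - φ) ^ 2 * h φ) →
        Fbar = 2 * ∫ φ in (0:ℝ)..(2 * π), h φ) := by
  constructor
  · rintro ⟨c₁, c₂, hFeq⟩ _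
    refine ⟨fun φ => Fbar/(4*π) + (c₁/π) * cos (2*φ) + (c₂/π) * sin (2*φ), by fun_prop, ?_, ?_⟩
    · intro φ
      have hc : cos (2*(φ+π)) = cos (2*φ) := by
        rw [show 2*(φ+π) = 2*φ + 2*π by ring, Real.cos_add_two_pi]
      have hs : sin (2*(φ+π)) = sin (2*φ) := by
        rw [show 2*(φ+π) = 2*φ + 2*π by ring, Real.sin_add_two_pi]
      simp [hc, hs]
    · intro ψ
      rw [key _ (by fun_prop) ψ]
      have I0 : ∫ φ in (0:ℝ)..(2*π), (Fbar/(4*π) + (c₁/π) * cos (2*φ) + (c₂/π) * sin (2*φ)) =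
          Fbar / 2 := by
        rw [intervalIntegral.integral_add (by apply Continuous.intervalIntegrable; fun_prop) (by apply Continuous.intervalIntegrable; fun_prop),
            intervalIntegral.integral_add (by apply Continuous.intervalIntegrable; fun_prop) (by apply Continuous.intervalIntegrable; fun_prop),
            intervalIntegral.integral_const_mul, intervalIntegral.integral_const_mul,
            Ic, Is, intervalIntegral.integral_const]
        field_simp
        simp only [smul_eq_mul, sub_zero, zero_mul, add_zero]
        rw [show (2:ℝ) * (π * (2 * π * (Fbar / (π * 4)))) = π * Fbar * (π / π) by ring, div_self Real.pi_ne_zero, mul_one]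
      have I1 : ∫ φ in (0:ℝ)..(2*π),
          cos (2*φ) * (Fbar/(4*π) + (c₁/π) * cos (2*φ) + (c₂/π) * sin (2*φ)) = c₁ := by
        have e : ∀ φ : ℝ, cos (2*φ) * (Fbar/(4*π) + (c₁/π) * cos (2*φ) + (c₂/π) * sin (2*φ)) =
            (Fbar/(4*π)) * cos (2*φ) + (c₁/π) * cos (2*φ)^2 + (c₂/π) * (sin (2*φ) * cos (2*φ)) := by
          intro φ; ring
        simp only [e]
        rw [intervalIntegral.integral_add (by apply Continuous.intervalIntegrable; fun_prop) (by apply Continuous.intervalIntegrable; fun_prop),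
            intervalIntegral.integral_add (by apply Continuous.intervalIntegrable; fun_prop) (by apply Continuous.intervalIntegrable; fun_prop),
            intervalIntegral.integral_const_mul, intervalIntegral.integral_const_mul,
            intervalIntegral.integral_const_mul, Ic, Icc, Isc]
        field_simp
        ring
      have I2 : ∫ φ in (0:ℝ)..(2*π),
          sin (2*φ) * (Fbar/(4*π) + (c₁/π) * cos (2*φ) + (c₂/π) * sin (2*φ)) = c₂ := by
        have e : ∀ φ : ℝ, sin (2*φ) * (Fbar/(4*π) + (c₁/π) * cos (2*φ) + (c₂/π) * sin (2*φ)) =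
            (Fbar/(4*π)) * sin (2*φ) + (c₁/π) * (sin (2*φ) * cos (2*φ)) + (c₂/π) * sin (2*φ)^2 := by
          intro φ; ring
        simp only [e]
        rw [intervalIntegral.integral_add (by apply Continuous.intervalIntegrable; fun_prop) (by apply Continuous.intervalIntegrable; fun_prop),
            intervalIntegral.integral_add (by apply Continuous.intervalIntegrable; fun_prop) (by apply Continuous.intervalIntegrable; fun_prop),
            intervalIntegral.integral_const_mul, intervalIntegral.integral_const_mul,
            intervalIntegral.integral_const_mul, Is, Iss, Isc]
        field_simp
        ring
      rw [I0, I1, I2, hFeq ψ]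
      ring
  · intro h hc _ _ hFeq
    have hA : ∀ ψ : ℝ, F ψ = (∫ φ in (0:ℝ)..(2*π), h φ)
        + cos (2*ψ) * (∫ φ in (0:ℝ)..(2*π), cos (2*φ) * h φ)
        + sin (2*ψ) * (∫ φ in (0:ℝ)..(2*π), sin (2*φ) * h φ) := by
      intro ψ
      rw [hFeq ψ, key h hc ψ]
      ring
    have hInt : ∫ ψ in (0:ℝ)..(2*π), F ψ = 2 * π * (∫ φ in (0:ℝ)..(2*π), h φ) := by
      simp only [hA]
      rw [intervalIntegral.integral_add (by apply Continuous.intervalIntegrable; fun_prop) (by apply Continuous.intervalIntegrable; fun_prop),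
          intervalIntegral.integral_add (by apply Continuous.intervalIntegrable; fun_prop) (by apply Continuous.intervalIntegrable; fun_prop)]
      rw [show (fun ψ => cos (2*ψ) * (∫ φ in (0:ℝ)..(2*π), cos (2*φ) * h φ)) =
          fun ψ => (∫ φ in (0:ℝ)..(2*π), cos (2*φ) * h φ) * cos (2*ψ) from by
            funext ψ; ring]
      rw [show (fun ψ => sin (2*ψ) * (∫ φ in (0:ℝ)..(2*π), sin (2*φ) * h φ)) =
          fun ψ => (∫ φ in (0:ℝ)..(2*π), sin (2*φ) * h φ) * sin (2*ψ) from by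
            funext ψ; ring]
      rw [intervalIntegral.integral_const_mul, intervalIntegral.integral_const_mul,
          Ic, Is, intervalIntegral.integral_const]
      simp [smul_eq_mul]
    rw [hFbar, hInt]
    field_simp
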